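/- Let F be an intertwined v-chain with both projections of all elements in N(v), let mon_F be the monomial attached to F (the vertical projections of its elements, plus the horizontal projection of the last element when |F| is odd), and let mon_{F̂} be the monomial attached to its starred new form F̂ (all distinct projections of F, dropping the smallest when the total number is odd). Then every v-chain contained in mon_F is dominated by some v-chain contained in mon_{F̂}. -/

import Mathlib

open Finset

lemma dominate_of_count (s s' : Finset ℕ)
    (hc : ∀ t, (s.filter (t ≤ ·)).card ≤ (s'.filter (t ≤ ·)).card) :
    ∀ μ : List ℕ, μ.Chain' (· > ·) → (∀ x ∈ μ, x ∈ s) →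
      ∃ ν : List ℕ, ν.Chain' (· > ·) ∧ (∀ x ∈ ν, x ∈ s') ∧
        μ.length ≤ ν.length ∧ ∀ i < μ.length, μ.getD i 0 ≤ ν.getD i 0 := by
  intro μ hμchain hμmem
  set L : List ℕ := (s'.sort (· ≤ ·)).reverse with hL
  have hLpair : L.Pairwise (· > ·) := by
    rw [hL, List.pairwise_reverse]
    exact (Finset.sortedLT_sort s').pairwise
  have hLlen : L.length = s'.card := by
    rw [hL, List.length_reverse, Finset.length_sort]
  have hLmem : ∀ x, x ∈ L ↔ x ∈ s' := by
    intro x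
    rw [hL, List.mem_reverse, Finset.mem_sort]
  have hμpair : μ.Pairwise (· > ·) := List.isChain_iff_pairwise.mp hμchain
  have hμnodup : μ.Nodup := hμpair.imp (fun h => (ne_of_gt h))
  have hlen : μ.length ≤ s'.card := by
    have h1 : μ.toFinset ⊆ s := fun x hx => hμmem x (List.mem_toFinset.mp hx)
    have h2 : μ.toFinset.card = μ.length := List.toFinset_card_of_nodup hμnodup
    have h3 : s.card ≤ s'.card := by
      have := hc 0
      simpa [Finset.filter_true_of_mem (fun x _ => Nat.zero_le x)] using this
    calc μ.length = μ.toFinset.card := h2.symm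
      _ ≤ s.card := Finset.card_le_card h1
      _ ≤ s'.card := h3
  refine ⟨L.take μ.length, ?_, ?_, ?_, ?_⟩
  · exact List.isChain_iff_pairwise.mpr (hLpair.sublist (List.take_sublist _ _))
  · exact fun x hx => (hLmem x).mp (List.mem_of_mem_take hx)
  · rw [List.length_take, hLlen]
    exact le_min le_rfl hlen
  · intro i hi
    have hiL : i < L.length := by rw [hLlen]; exact lt_of_lt_of_le hi hlen
    have hν : (L.take μ.length).getD i 0 = L[i] := by
      rw [List.getD_eq_getElem _ _ (by rw [List.length_take]; exact lt_min hi hiL)]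
      simp
    have hμg : μ.getD i 0 = μ[i] := List.getD_eq_getElem _ _ hi
    rw [hν, hμg]
    by_contra hlt
    push_neg at hlt
    set t := μ[i] with ht
    -- lower bound: i+1 ≤ (s.filter (t ≤ ·)).card
    have htake : (μ.take (i+1)).length = i + 1 := by
      rw [List.length_take]; exact min_eq_left hi
    have hlow : i + 1 ≤ (s.filter (t ≤ ·)).card := by
      have hsub : (μ.take (i+1)).toFinset ⊆ s.filter (t ≤ ·) := by
        intro x hx
        rw [List.mem_toFinset] at hx
        obtain ⟨j, hj, hxj⟩ := List.getElem_of_mem hx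
        rw [htake] at hj
        have hjlen : j < μ.length := lt_of_le_of_lt (Nat.lt_succ_iff.mp hj) hi
        rw [List.getElem_take] at hxj
        rw [Finset.mem_filter]
        refine ⟨hμmem x (hxj ▸ List.getElem_mem hjlen), ?_⟩
        rcases Nat.lt_or_ge j i with hji | hji
        · have := (List.pairwise_iff_getElem.mp hμpair) j i hjlen hi hji
          exact le_of_lt (hxj ▸ this)
        · have : j = i := le_antisymm (Nat.lt_succ_iff.mp hj) hji
          subst this
          exact le_of_eq (hxj ▸ rfl)
      have hcard : (μ.take (i+1)).toFinset.card = i + 1 := by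
        rw [List.toFinset_card_of_nodup (hμnodup.sublist (List.take_sublist _ _)), htake]
      calc i + 1 = (μ.take (i+1)).toFinset.card := hcard.symm
        _ ≤ (s.filter (t ≤ ·)).card := Finset.card_le_card hsub
    -- upper bound
    have hup : (s'.filter (t ≤ ·)).card ≤ i := by
      have hsub : s'.filter (t ≤ ·) ⊆ (L.take i).toFinset := by
        intro x hx
        rw [Finset.mem_filter] at hx
        obtain ⟨hxs, hxt⟩ := hx
        obtain ⟨j, hj, hxj⟩ := List.getElem_of_mem ((hLmem x).mpr hxs)
        have hji : j < i := by
          by_contra hji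
          push_neg at hji
          have hLji : L[j] ≤ L[i] := by
            rcases Nat.lt_or_ge i j with h | h
            · exact le_of_lt ((List.pairwise_iff_getElem.mp hLpair) i j hiL hj h)
            · have : j = i := le_antisymm h hji
              subst this; exact le_rfl
          exact absurd (le_trans hxt (hxj ▸ hLji)) (not_le.mpr hlt)
        rw [List.mem_toFinset]
        have hjt : j < (L.take i).length := by
          rw [List.length_take]; exact lt_min hji hj
        have : (L.take i)[j] = x := by rw [List.getElem_take]; exact hxj
        exact this ▸ List.getElem_mem hjt
      calc (s'.filter (t ≤ ·)).card ≤ (L.take i).toFinset.card := Finset.card_le_card hsub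
        _ ≤ (L.take i).length := (L.take i).toFinset_card_le
        _ ≤ i := by rw [List.length_take]; exact min_le_left _ _
    exact absurd (le_trans hlow (hc t)) (not_le.mpr (Nat.lt_succ_of_le hup))

/-- (Lemma `l:p:newdomination:1`) let `F` be an intertwined
`v`-chain both projections of all of whose elements lie in `N(v)` (diagonal
elements are recorded by their row indices, the projections of `(r,c)` being
`r` and `c* = 2d+1-c`).  Let `mon_F` be the monomial attached to `F` (vertical
projections of all elements, together with the horizontal projection of the
last element when `|F|` is odd) and `mon_{F̂}` the monomial attached to its
starred new form (all distinct projections of `F`, dropping the smallest when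
their total number is odd).  Then every strictly decreasing chain contained in
`mon_F` is dominated by one contained in `mon_{F̂}`: the dominating chain is at
least as long and is entrywise at least as large. -/
theorem chains_in_monF_dominated_by_chains_in_monFhat
    (d m : ℕ) (hm : 0 < m) (v : Finset ℕ) (F : Fin m → ℕ × ℕ)
    (hchain : ∀ i j : Fin m, i < j → (F j).1 < (F i).1 ∧ (F i).2 < (F j).2)
    (hON : ∀ i, (F i).1 ∉ v ∧ (F i).2 ∈ v ∧ (F i).2 < (F i).1 ∧
      (F i).1 < 2 * d + 1 - (F i).2)
    -- both projections of every element belong to `N(v)`: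
    (hproj : ∀ i, (2 * d + 1 - (F i).1) ∈ v ∧ 2 * d + 1 - (F i).1 < (F i).1)
    -- `F` is intertwined:
    (hint : ∀ i : Fin m, ∀ h : i.1 + 1 < m,
      (F i).1 ≤ 2 * d + 1 - (F ⟨i.1 + 1, h⟩).2)
    (V P monF monFhat : Finset ℕ)
    (hV : V = Finset.univ.image fun i => 2 * d + 1 - (F i).2)
    (hmonF : monF = if Even m then V
      else V ∪ {(F ⟨m - 1, Nat.sub_lt hm Nat.one_pos⟩).1})
    (hP : P = (Finset.univ.image fun i => (F i).1) ∪ V)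
    (hmonFhat : monFhat = if Even P.card then P
      else P.filter fun x => ∃ y ∈ P, y < x) :
    ∀ μ : List ℕ, μ.Chain' (· > ·) → (∀ x ∈ μ, x ∈ monF) →
      ∃ ν : List ℕ, ν.Chain' (· > ·) ∧ (∀ x ∈ ν, x ∈ monFhat) ∧
        μ.length ≤ ν.length ∧ ∀ i < μ.length, μ.getD i 0 ≤ ν.getD i 0 := by
  intro μ hμc hμm
  set last : Fin m := ⟨m - 1, Nat.sub_lt hm Nat.one_pos⟩ with hlast
  set r : ℕ := (F last).1 with hrdef
  -- r is the least among all projections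
  have hrle : ∀ i : Fin m, r ≤ (F i).1 := by
    intro i
    have hile : i ≤ last := by
      rw [Fin.le_def]
      have := i.2
      simp only [hlast]
      omega
    rcases eq_or_lt_of_le hile with h | h
    · rw [h]
    · exact le_of_lt (hchain i last h).1
  have hrlt : ∀ i : Fin m, r < 2 * d + 1 - (F i).2 :=
    fun i => lt_of_le_of_lt (hrle i) (hON i).2.2.2
  have hPge : ∀ x ∈ P, r ≤ x := by
    intro x hx
    rw [hP, Finset.mem_union] at hx
    rcases hx with hx | hx
    · obtain ⟨i, _, rfl⟩ := Finset.mem_image.mp hx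
      exact hrle i
    · rw [hV] at hx
      obtain ⟨i, _, rfl⟩ := Finset.mem_image.mp hx
      exact le_of_lt (hrlt i)
  have hrP : r ∈ P := by
    rw [hP, Finset.mem_union]
    exact Or.inl (Finset.mem_image.mpr ⟨last, Finset.mem_univ _, rfl⟩)
  have hVP : V ⊆ P := by rw [hP]; exact Finset.subset_union_right
  have hmonFP : monF ⊆ P := by
    rw [hmonF]
    split_ifs
    · exact hVP
    · exact Finset.union_subset hVP (Finset.singleton_subset_iff.mpr hrP)
  have hVcard : V.card = m := by
    have hsa : StrictAnti fun i : Fin m => 2 * d + 1 - (F i).2 := by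
      intro i j hij
      have h1 := (hchain i j hij).2
      have h2 := (hON j).2.2.1
      have h3 := (hON j).2.2.2
      simp only
      omega
    rw [hV, Finset.card_image_of_injective _ hsa.injective, Finset.card_univ,
      Fintype.card_fin]
  have hrV : r ∉ V := by
    rw [hV]
    intro hmem
    obtain ⟨i, _, hi⟩ := Finset.mem_image.mp hmem
    have := hrlt i
    omega
  have hPcard : m + 1 ≤ P.card := by
    have hsub : V ∪ {r} ⊆ P :=
      Finset.union_subset hVP (Finset.singleton_subset_iff.mpr hrP)
    have hcard : (V ∪ {r}).card = m + 1 := by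
      rw [Finset.union_comm, ← Finset.insert_eq, Finset.card_insert_of_notMem hrV,
        hVcard]
    rw [← hcard]
    exact Finset.card_le_card hsub
  have hc : ∀ t, (monF.filter (t ≤ ·)).card ≤ (monFhat.filter (t ≤ ·)).card := by
    by_cases hEP : Even P.card
    · rw [hmonFhat, if_pos hEP]
      exact fun t => Finset.card_le_card (Finset.filter_subset_filter _ hmonFP)
    · have hhat : monFhat = P.erase r := by
        rw [hmonFhat, if_neg hEP]
        ext x
        rw [Finset.mem_filter, Finset.mem_erase]
        constructor
        · rintro ⟨hx, y, hy, hyx⟩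
          refine ⟨?_, hx⟩
          rintro rfl
          exact absurd hyx (not_lt.mpr (hPge y hy))
        · rintro ⟨hne, hx⟩
          exact ⟨hx, r, hrP, lt_of_le_of_ne (hPge x hx) (Ne.symm hne)⟩
      intro t
      rcases le_or_gt t r with htr | htr
      · have h1 : monF.filter (t ≤ ·) = monF :=
          Finset.filter_true_of_mem fun x hx => le_trans htr (hPge x (hmonFP hx))
        have h2 : (P.erase r).filter (t ≤ ·) = P.erase r :=
          Finset.filter_true_of_mem fun x hx =>
            le_trans htr (hPge x (Finset.mem_of_mem_erase hx))
        rw [hhat, h1, h2, Finset.card_erase_of_mem hrP]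
        by_cases hEm : Even m
        · rw [hmonF, if_pos hEm, hVcard]
          omega
        · rw [hmonF, if_neg hEm]
          have hcard : (V ∪ {r}).card = m + 1 := by
            rw [Finset.union_comm, ← Finset.insert_eq,
              Finset.card_insert_of_notMem hrV, hVcard]
          rw [hcard]
          have hne : P.card ≠ m + 1 := by
            intro h
            exact hEP (h ▸ (Nat.not_even_iff_odd.mp hEm).add_one)
          omega
      · rw [hhat]
        apply Finset.card_le_card
        intro x hx
        rw [Finset.mem_filter] at hx ⊢
        obtain ⟨hxF, hxt⟩ := hx
        refine ⟨Finset.mem_erase.mpr ⟨?_, hmonFP hxF⟩, hxt⟩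
        intro hxr
        omega
  exact dominate_of_count monF monFhat hc μ hμc hμm
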